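/- Suppose a graph G on n vertices (n even) admits a τ-reduction into s = n/2 disjoint edges y₁,…,y_s whose vertex sets partition V(G). If G contains an odd cycle C with k vertices, then the vector w − (1, n/2 + 1), where w = Σᵢ(vᵢ,1) + (1_C,(k+1)/2) and 1 = (1,…,1), equals (1_C, (k−1)/2), and this vector has coordinate sum |1_C| = k > 2·(k−1)/2; hence (1_C,(k−1)/2) ∉ ℕB. -/

import Mathlib

/-- The set `B = {(e₁,1),…,(e_n,1)} ∪ {(v,1) : v edge characteristic vector} ∪ {e_{n+1}}`
inside `ℤⁿ × ℤ`. -/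
def graphGenSetZ (n : ℕ) (G : SimpleGraph (Fin n)) : Set ((Fin n → ℤ) × ℤ) :=
  {p | ∃ i : Fin n, p = (Pi.single i 1, 1)} ∪
  {p | ∃ a b : Fin n, G.Adj a b ∧ p = (Pi.single a 1 + Pi.single b 1, 1)} ∪
  {((0 : Fin n → ℤ), 1)}

/-- Every element of the closure satisfies the degree bound `∑ w ≤ 2 b`. -/
lemma degree_bound {n : ℕ} (G : SimpleGraph (Fin n)) (p : (Fin n → ℤ) × ℤ)
    (hp : p ∈ AddSubmonoid.closure (graphGenSetZ n G)) :
    (∑ j : Fin n, p.1 j) ≤ 2 * p.2 := by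
  induction hp using AddSubmonoid.closure_induction with
  | mem q hq =>
    rcases hq with (⟨i, rfl⟩ | ⟨u, v, huv, rfl⟩) | hq
    · simp [Pi.single_apply]
    · simp [Finset.sum_add_distrib, Finset.sum_pi_single']
    · simp at hq; subst hq; simp
  | zero => simp
  | add q r _ _ hq hr =>
    simp only [Prod.fst_add, Prod.snd_add, Pi.add_apply, Finset.sum_add_distrib]
    linarith

theorem oddCycle_vector_not_mem_NB {n k : ℕ} [NeZero k]
    (hn : Even n) (hk : Odd k) (hk3 : 3 ≤ k) (G : SimpleGraph (Fin n))
    (a b : Fin (n / 2) → Fin n) (hab : ∀ i, G.Adj (a i) (b i))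
    (hdisj : ∀ i j : Fin (n / 2), i ≠ j →
      Disjoint ({a i, b i} : Finset (Fin n)) {a j, b j})
    (hcover : (Finset.univ.biUnion fun i : Fin (n / 2) => ({a i, b i} : Finset (Fin n)))
        = Finset.univ)
    (x : Fin k → Fin n) (hinj : Function.Injective x)
    (hadj : ∀ i : Fin k, G.Adj (x i) (x (i + 1))) :
    ((∑ i : Fin (n / 2),
        ((Pi.single (a i) 1 + Pi.single (b i) 1, 1) : (Fin n → ℤ) × ℤ))
      + (∑ i : Fin k, Pi.single (x i) 1, (((k + 1) / 2 : ℕ) : ℤ)))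
      - ((fun _ : Fin n => 1, ((n / 2 : ℕ) : ℤ) + 1) : (Fin n → ℤ) × ℤ)
      = (∑ i : Fin k, Pi.single (x i) 1, (((k - 1) / 2 : ℕ) : ℤ))
    ∧ (∑ j : Fin n, (∑ i : Fin k, Pi.single (x i) 1 : Fin n → ℤ) j) = (k : ℤ)
    ∧ (k : ℤ) > 2 * (((k - 1) / 2 : ℕ) : ℤ)
    ∧ ((∑ i : Fin k, Pi.single (x i) 1, (((k - 1) / 2 : ℕ) : ℤ)) : (Fin n → ℤ) × ℤ)
        ∉ AddSubmonoid.closure (graphGenSetZ n G) := by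
  have hones : (∑ i : Fin (n / 2), (Pi.single (a i) (1:ℤ) + Pi.single (b i) 1))
      = (fun _ : Fin n => 1 : Fin n → ℤ) := by
    funext j
    have hj : j ∈ Finset.univ.biUnion fun i : Fin (n / 2) =>
        ({a i, b i} : Finset (Fin n)) := by rw [hcover]; exact Finset.mem_univ j
    simp only [Finset.mem_biUnion, Finset.mem_univ, true_and] at hj
    obtain ⟨i₀, hi₀⟩ := hj
    rw [Finset.sum_apply]
    rw [Finset.sum_eq_single i₀]
    · simp only [Pi.add_apply, Pi.single_apply]
      have hne : a i₀ ≠ b i₀ := (hab i₀).ne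
      rcases Finset.mem_insert.mp hi₀ with h | h
      · subst h; simp [hne]
      · have : j = b i₀ := Finset.mem_singleton.mp h
        subst this; simp [hne.symm]
    · intro i _ hi
      have hd := hdisj i i₀ hi
      have : j ∉ ({a i, b i} : Finset (Fin n)) :=
        fun hmem => (Finset.disjoint_left.mp hd hmem) hi₀
      simp only [Finset.mem_insert, Finset.mem_singleton, not_or] at this
      simp [Pi.single_apply, Ne.symm this.1, Ne.symm this.2, this.1, this.2]
    · intro h; exact absurd (Finset.mem_univ i₀) h
  have hsum : (∑ j : Fin n, (∑ i : Fin k, Pi.single (x i) (1:ℤ) : Fin n → ℤ) j)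
      = (k : ℤ) := by
    simp only [Finset.sum_apply]
    rw [Finset.sum_comm]
    simp [Finset.sum_pi_single']
  obtain ⟨m, hm⟩ := hk
  have hdiv1 : ((k + 1) / 2 : ℕ) = m + 1 := by omega
  have hdiv2 : ((k - 1) / 2 : ℕ) = m := by omega
  refine ⟨?_, hsum, ?_, ?_⟩
  · rw [Prod.ext_iff]
    constructor
    · simp only [Prod.fst_sub, Prod.fst_add, Prod.fst_sum]
      rw [hones]
      funext j
      simp
    · simp only [Prod.snd_sub, Prod.snd_add, Prod.snd_sum]
      rw [hdiv1, hdiv2]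
      simp only [Finset.sum_const, Finset.card_univ, Fintype.card_fin, nsmul_eq_mul, mul_one]
      push_cast
      ring
  · rw [hdiv2]; push_cast; omega
  · intro hmem
    have := degree_bound G _ hmem
    simp only at this
    rw [hsum, hdiv2] at this
    omega
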